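/- Let (𝒯, ℱ) be a torsion pair in R-Mod and B a module satisfying condition (3'): every non-split short exact sequence 0 → B → M → T → 0 with T ∈ 𝒯 has M ∈ 𝒯. Then B satisfies condition (3): for every short exact sequence 0 → B → F → M → 0 with F ∈ ℱ, the module M lies in ℱ. -/

import Mathlib

universe u v
variable {R : Type u} [Ring R]

/-- A torsion pair in `R`-Mod: `Hom(𝒯, ℱ) = 0` and both classes are maximal with
this property. -/
def IsTorsionPair (R : Type u) [Ring R] (𝒯 ℱ : Set (ModuleCat.{v} R)) : Prop :=
  (∀ T ∈ 𝒯, ∀ F ∈ ℱ, ∀ f : ↑T →ₗ[R] ↑F, f = 0) ∧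
  (∀ M : ModuleCat.{v} R, (∀ F ∈ ℱ, ∀ f : ↑M →ₗ[R] ↑F, f = 0) → M ∈ 𝒯) ∧
  (∀ M : ModuleCat.{v} R, (∀ T ∈ 𝒯, ∀ f : ↑T →ₗ[R] ↑M, f = 0) → M ∈ ℱ)

/-- Every module has a torsion submodule, lying in `𝒯`, with quotient in `ℱ`. -/
def HasTorsionRadical (R : Type u) [Ring R] (𝒯 ℱ : Set (ModuleCat.{v} R)) : Prop :=
  ∀ M : ModuleCat.{v} R, ∃ tM : Submodule R ↑M,
    ModuleCat.of R tM ∈ 𝒯 ∧ ModuleCat.of R (↑M ⧸ tM) ∈ ℱ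

/-- If a nonzero torsionfree module `B` satisfies condition (3') — every non-split
short exact sequence `0 → B → M → T → 0` with `T` torsion has `M` torsion — then it
satisfies condition (3): for every short exact sequence `0 → B → F → M → 0` with
`F` torsionfree, `M` is torsionfree. -/
theorem stmt_14 (𝒯 ℱ : Set (ModuleCat.{v} R)) (htp : IsTorsionPair R 𝒯 ℱ)
    (hrad : HasTorsionRadical R 𝒯 ℱ)
    (B : ModuleCat.{v} R) (hB0 : Nontrivial ↑B) (hBF : B ∈ ℱ)
    (h3' : ∀ T ∈ 𝒯, ∀ M : ModuleCat.{v} R, ∀ (i : ↑B →ₗ[R] ↑M) (p : ↑M →ₗ[R] ↑T),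
      Function.Injective i → Function.Surjective p →
      LinearMap.range i = LinearMap.ker p →
      (¬ ∃ s : ↑T →ₗ[R] ↑M, p ∘ₗ s = LinearMap.id) → M ∈ 𝒯) :
    ∀ F ∈ ℱ, ∀ M : ModuleCat.{v} R, ∀ (i : ↑B →ₗ[R] ↑F) (p : ↑F →ₗ[R] ↑M),
      Function.Injective i → Function.Surjective p →
      LinearMap.range i = LinearMap.ker p → M ∈ ℱ := by
  intro F hF M i p hi hp hexact
  obtain ⟨tM, htM, hQ⟩ := hrad M
  -- pullback: preimage of tM in F
  set M' : Submodule R ↑F := Submodule.comap p tM with hM'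
  -- i lands in M'
  have hiB : ∀ b : ↑B, i b ∈ M' := by
    intro b
    have : i b ∈ LinearMap.ker p := by
      rw [← hexact]; exact ⟨b, rfl⟩
    simp only [hM', Submodule.mem_comap]
    simp [LinearMap.mem_ker.mp this]
  let i' : ↑B →ₗ[R] ↥M' := LinearMap.codRestrict M' i hiB
  let p' : ↥M' →ₗ[R] ↥tM := LinearMap.restrict p (fun x hx => hx)
  have hi' : Function.Injective i' := fun a b hab => hi (congrArg Subtype.val hab)
  have hp' : Function.Surjective p' := by
    rintro ⟨t, ht⟩
    obtain ⟨f, hf⟩ := hp t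
    refine ⟨⟨f, ?_⟩, ?_⟩
    · simp [hM', Submodule.mem_comap, hf, ht]
    · apply Subtype.ext; simpa [p', LinearMap.restrict_apply] using hf
  have hex' : LinearMap.range i' = LinearMap.ker p' := by
    ext x
    constructor
    · rintro ⟨b, rfl⟩
      have : p (i b) = 0 := by
        have : i b ∈ LinearMap.ker p := by rw [← hexact]; exact ⟨b, rfl⟩
        exact this
      apply Subtype.ext
      simpa [p', LinearMap.restrict_apply, i', LinearMap.codRestrict_apply]
    · intro hx
      have hpx : p (x : ↑F) = 0 := congrArg Subtype.val hx
      have : (x : ↑F) ∈ LinearMap.range i := by rw [hexact]; exact hpx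
      obtain ⟨b, hb⟩ := this
      exact ⟨b, Subtype.ext hb⟩
  -- The sequence 0 → B → M' → tM → 0 splits
  have hsplit : ∃ s : ↥tM →ₗ[R] ↥M', p' ∘ₗ s = LinearMap.id := by
    by_contra hnons
    have hM'T : ModuleCat.of R ↥M' ∈ 𝒯 :=
      h3' (ModuleCat.of R ↥tM) htM (ModuleCat.of R ↥M') i' p' hi' hp' hex' hnons
    have hzero := htp.1 (ModuleCat.of R ↥M') hM'T F hF M'.subtype
    obtain ⟨b, hb⟩ := exists_ne (0 : ↑B)
    have : i b = 0 := by
      have := congrFun (congrArg DFunLike.coe hzero) (i' b)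
      have h2 : i' b = 0 := by simpa using this
      exact congrArg Subtype.val h2
    exact hb (hi (by simpa using this))
  obtain ⟨s, hs⟩ := hsplit
  -- composite tM → M' → F is zero, so s = 0, so tM = ⊥
  have hzero := htp.1 (ModuleCat.of R ↥tM) htM F hF (M'.subtype ∘ₗ s)
  have htbot : ∀ t : ↥tM, t = 0 := by
    intro t
    have hs0 : s t = 0 := by
      have h := congrFun (congrArg DFunLike.coe hzero) t
      simp only [LinearMap.coe_comp, Function.comp_apply, Submodule.coe_subtype,
        LinearMap.zero_apply] at h
      exact Subtype.ext h
    have := congrFun (congrArg DFunLike.coe hs) t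
    simp only [LinearMap.coe_comp, Function.comp_apply, LinearMap.id_apply] at this
    rw [← this, hs0, map_zero]
  have hbot : tM = ⊥ := by
    ext x; simp only [Submodule.mem_bot]
    constructor
    · intro hx; exact congrArg Subtype.val (htbot ⟨x, hx⟩)
    · rintro rfl; exact tM.zero_mem
  -- mkQ is injective, so M embeds in M ⧸ tM ∈ ℱ; conclude M ∈ ℱ
  have hmkQinj : Function.Injective tM.mkQ := by
    rw [← LinearMap.ker_eq_bot, Submodule.ker_mkQ, hbot]
  apply htp.2.2
  intro T hT f
  have := htp.1 T hT (ModuleCat.of R (↑M ⧸ tM)) hQ (tM.mkQ ∘ₗ f)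
  ext x
  have hx := congrFun (congrArg DFunLike.coe this) x
  simp only [LinearMap.coe_comp, Function.comp_apply, LinearMap.zero_apply] at hx ⊢
  exact hmkQinj (hx.trans (map_zero _).symm)
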